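/- Fix reals P_f > 0, b_max ≥ P_f, and S_f > 0 (the floor supply). Let D : [P_f, ∞) → (0, ∞) be continuous and nonincreasing, and let f : [1, ∞) → [P_f, b_max] be continuous and strictly increasing. Define the load α(P) = max(1, D(P)/S_f). Then: (i) α is nonincreasing in P; and (ii) there exists a unique P* ∈ [P_f, b_max] satisfying the fixed-point equation P* = f(α(P*)). -/
import Mathlib


/-- the load `α(P) = max(1, D(P)/S_f)` is nonincreasing in `P`, and
there is a unique equilibrium quote `P* ∈ [P_f, b_max]` solving the fixed-point
equation `P* = f(α(P*))`. -/
theorem equilibrium_quote_exists_unique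
    (P_f b_max S_f : ℝ) (hPf : 0 < P_f) (hb : P_f ≤ b_max) (hSf : 0 < S_f)
    (D : ℝ → ℝ) (hDpos : ∀ P : ℝ, P_f ≤ P → 0 < D P)
    (hDcont : ContinuousOn D (Set.Ici P_f))
    (hDanti : AntitoneOn D (Set.Ici P_f))
    (f : ℝ → ℝ) (hfcont : ContinuousOn f (Set.Ici 1))
    (hfmono : StrictMonoOn f (Set.Ici 1))
    (hfrange : ∀ α : ℝ, 1 ≤ α → f α ∈ Set.Icc P_f b_max) :
    AntitoneOn (fun P => max 1 (D P / S_f)) (Set.Ici P_f) ∧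
    ∃! P : ℝ, P ∈ Set.Icc P_f b_max ∧ P = f (max 1 (D P / S_f)) := by
  set α : ℝ → ℝ := fun P => max 1 (D P / S_f) with hα
  have hαanti : AntitoneOn α (Set.Ici P_f) := by
    intro a ha b hb hab
    have := hDanti ha hb hab
    exact max_le_max le_rfl (by gcongr)
  refine ⟨hαanti, ?_⟩
  set h : ℝ → ℝ := fun P => f (α P) with hhdef
  have hα1 : ∀ P, 1 ≤ α P := fun P => le_max_left _ _
  have hhanti : AntitoneOn h (Set.Icc P_f b_max) := by
    intro a ha b hb hab
    exact (hfmono.monotoneOn) (Set.mem_Ici.2 (hα1 b)) (Set.mem_Ici.2 (hα1 a))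
      (hαanti (Set.mem_Ici.2 ha.1) (Set.mem_Ici.2 hb.1) hab)
  have hαcont : ContinuousOn α (Set.Ici P_f) :=
    ContinuousOn.sup continuousOn_const (hDcont.div continuousOn_const (fun _ _ => hSf.ne'))
  have hhcont : ContinuousOn h (Set.Icc P_f b_max) := by
    apply ContinuousOn.comp (hfcont) (hαcont.mono Set.Icc_subset_Ici_self)
    intro x _; exact Set.mem_Ici.2 (hα1 x)
  have hhmem : ∀ P, h P ∈ Set.Icc P_f b_max := fun P => hfrange _ (hα1 P)
  -- G = h - id, IVT
  set G : ℝ → ℝ := fun P => h P - P with hG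
  have hGcont : ContinuousOn G (Set.Icc P_f b_max) := hhcont.sub continuousOn_id
  have hGa : 0 ≤ G P_f := sub_nonneg.2 (hhmem P_f).1
  have hGb : G b_max ≤ 0 := sub_nonpos.2 (hhmem b_max).2
  have h0 : (0:ℝ) ∈ Set.Icc (G b_max) (G P_f) := ⟨hGb, hGa⟩
  obtain ⟨P, hPmem, hPzero⟩ := intermediate_value_Icc' hb hGcont h0
  have hPfix : P = h P := by linarith [hPzero.symm ▸ (rfl : G P = G P), sub_eq_zero.1 hPzero]
  refine ⟨P, ⟨hPmem, hPfix⟩, ?_⟩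
  rintro Q ⟨hQmem, hQfix0⟩
  have hQfix : Q = h Q := hQfix0
  by_contra hne
  rcases lt_or_gt_of_ne hne with hlt | hlt
  · have : h P ≤ h Q := hhanti hQmem hPmem hlt.le
    rw [← hPfix, ← hQfix] at this
    exact absurd this (not_le.2 hlt)
  · have : h Q ≤ h P := hhanti hPmem hQmem hlt.le
    rw [← hPfix, ← hQfix] at this
    exact absurd this (not_le.2 hlt)
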